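/- In model R, for every n ≥ 0 and s ≥ 1 the s-th moment has the closed form E(W_n^s) = (∏_{j=0}^{n−1} γ_{j,s}) · ( W_0^s + Σ_{ℓ=0}^{n−1} δ_{ℓ,s}/∏_{j=0}^{ℓ} γ_{j,s} ), where γ_{n,s} := Σ_{ℓ=0}^{s} c^ℓ·C(s,ℓ)·m^{(ℓ)}/T_n^ℓ and δ_{n,s} := Σ_{j=2}^{s} E(W_n^{s+1−j}) · Σ_{ℓ=j}^{s} C(s,ℓ)·c^ℓ·S(ℓ, ℓ+1−j)·m^{(ℓ+1−j)}/T_n^{ℓ+1−j}; equivalently, E(W_n^s) = γ_{n−1,s}·E(W_{n−1}^s) + δ_{n−1,s} for all n ≥ 1. -/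

import Mathlib

open Finset

/-- Total number of balls after `n` draws: `T_n = W_0 + B_0 + n·m·c`. -/
def urnT (W0 B0 m c n : ℕ) : ℕ := W0 + B0 + n * m * c

/-- Probability mass function of the number of white balls after `n` draws in
model `R` (at each step `m` balls are drawn one by one with replacement and, for
each drawn ball, `c` balls of the same color are added). -/
noncomputable def massR (W0 B0 m c : ℕ) : ℕ → ℕ → ℝ
  | 0 => fun v => if v = W0 then 1 else 0
  | n + 1 => fun v =>
      ∑ w ∈ Finset.range (urnT W0 B0 m c n + 1), ∑ k ∈ Finset.range (m + 1),
        if v = w + c * k then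
          massR W0 B0 m c n w *
            ((Nat.choose m k : ℝ) * (w : ℝ) ^ k *
                ((urnT W0 B0 m c n : ℝ) - (w : ℝ)) ^ (m - k) /
              (urnT W0 B0 m c n : ℝ) ^ m)
        else 0

/-- The `s`-th moment `E(W_n^s)` of the number of white balls in model `R`. -/
noncomputable def momR (W0 B0 m c s n : ℕ) : ℝ :=
  ∑ w ∈ Finset.range (urnT W0 B0 m c n + 1), massR W0 B0 m c n w * (w : ℝ) ^ s

/-- Stirling numbers of the second kind `S(n,k)`. -/
def stirling2 : ℕ → ℕ → ℕ
  | 0, 0 => 1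
  | 0, _ + 1 => 0
  | _ + 1, 0 => 0
  | n + 1, k + 1 => (k + 1) * stirling2 n (k + 1) + stirling2 n k

/-- The coefficient `γ_{n,s} = Σ_{ℓ=0}^{s} c^ℓ·C(s,ℓ)·m^{(ℓ)}/T_n^ℓ` of the moment
recurrence in model `R`. -/
noncomputable def gammaR (W0 B0 m c n s : ℕ) : ℝ :=
  ∑ ℓ ∈ Finset.range (s + 1),
    (c : ℝ) ^ ℓ * (Nat.choose s ℓ : ℝ) * (Nat.descFactorial m ℓ : ℝ) /
      (urnT W0 B0 m c n : ℝ) ^ ℓ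

/-- The inhomogeneous term
`δ_{n,s} = Σ_{j=2}^{s} E(W_n^{s+1−j})·Σ_{ℓ=j}^{s} C(s,ℓ)·c^ℓ·S(ℓ,ℓ+1−j)·m^{(ℓ+1−j)}/T_n^{ℓ+1−j}`
of the moment recurrence in model `R`. -/
noncomputable def deltaR (W0 B0 m c n s : ℕ) : ℝ :=
  ∑ j ∈ Finset.Icc 2 s, momR W0 B0 m c (s + 1 - j) n *
    ∑ ℓ ∈ Finset.Icc j s, (Nat.choose s ℓ : ℝ) * (c : ℝ) ^ ℓ *
      (stirling2 ℓ (ℓ + 1 - j) : ℝ) * (Nat.descFactorial m (ℓ + 1 - j) : ℝ) /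
      (urnT W0 B0 m c n : ℝ) ^ (ℓ + 1 - j)

lemma stirling2_zero (n : ℕ) : stirling2 (n+1) 0 = 0 := rfl

lemma stirling2_of_lt : ∀ {n k : ℕ}, n < k → stirling2 n k = 0
  | 0, _+1, _ => rfl
  | n+1, k+1, h => by
      have h1 : n < k + 1 := by omega
      have h2 : n < k := by omega
      simp [stirling2, stirling2_of_lt h1, stirling2_of_lt h2]

lemma stirling2_self : ∀ n : ℕ, stirling2 n n = 1
  | 0 => rfl
  | n+1 => by
      simp [stirling2, stirling2_self n, stirling2_of_lt (Nat.lt_succ_self n)]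

lemma mul_descFactorial (k i : ℕ) :
    k * k.descFactorial i = k.descFactorial (i+1) + i * k.descFactorial i := by
  rcases le_or_gt i k with h | h
  · rw [Nat.descFactorial_succ]
    have : (k - i) + i = k := by omega
    nlinarith [Nat.descFactorial_succ k i]
  · simp [Nat.descFactorial_eq_zero_iff_lt.2 h,
      Nat.descFactorial_eq_zero_iff_lt.2 (Nat.lt_succ_of_lt h)]

lemma pow_eq_sum_stirling (ℓ k : ℕ) :
    k ^ ℓ = ∑ i ∈ range (ℓ+1), stirling2 ℓ i * k.descFactorial i := by
  induction ℓ with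
  | zero => simp [stirling2]
  | succ ℓ ih =>
    have : k ^ (ℓ+1) = ∑ i ∈ range (ℓ+1), stirling2 ℓ i * (k * k.descFactorial i) := by
      rw [pow_succ, ih, Finset.sum_mul]
      exact Finset.sum_congr rfl fun i _ => by ring
    rw [this]
    have hsplit : ∀ i, stirling2 ℓ i * (k * k.descFactorial i)
        = stirling2 ℓ i * k.descFactorial (i+1) + i * (stirling2 ℓ i * k.descFactorial i) := by
      intro i; rw [mul_descFactorial]; ring
    simp_rw [hsplit, Finset.sum_add_distrib]
    rw [Finset.sum_range_succ' (fun i => stirling2 (ℓ+1) i * k.descFactorial i) (ℓ+1)]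
    simp only [stirling2_zero, Nat.zero_mul, Nat.add_zero]
    have hrhs : ∀ i, stirling2 (ℓ+1) (i+1) * k.descFactorial (i+1)
        = (i+1) * (stirling2 ℓ (i+1) * k.descFactorial (i+1))
          + stirling2 ℓ i * k.descFactorial (i+1) := by
      intro i; show ((i+1) * stirling2 ℓ (i+1) + stirling2 ℓ i) * _ = _; ring
    simp_rw [hrhs, Finset.sum_add_distrib]
    rw [add_comm]
    congr 1
    rw [Finset.sum_range_succ' (fun i => i * (stirling2 ℓ i * k.descFactorial i)) ℓ]
    rw [Finset.sum_range_succ (fun i => (i+1) * (stirling2 ℓ (i+1) * k.descFactorial (i+1))) ℓ]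
    simp [stirling2_of_lt (Nat.lt_succ_self ℓ)]

lemma choose_mul_descFactorial' {m k i : ℕ} (hik : i ≤ k) (hkm : k ≤ m) :
    m.choose k * k.descFactorial i = m.descFactorial i * (m-i).choose (k-i) := by
  rw [Nat.descFactorial_eq_factorial_mul_choose, Nat.descFactorial_eq_factorial_mul_choose,
    ← Nat.mul_assoc, Nat.mul_comm (m.choose k) (Nat.factorial i), Nat.mul_assoc, Nat.choose_mul hik,
    Nat.mul_assoc]

lemma binom_desc (p q : ℝ) (m i : ℕ) :
    ∑ k ∈ range (m+1), (m.choose k : ℝ) * p^k * q^(m-k) * (k.descFactorial i : ℝ)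
      = (m.descFactorial i : ℝ) * p^i * (p+q)^(m-i) := by
  rcases lt_or_ge m i with h | h
  · rw [Nat.descFactorial_eq_zero_iff_lt.2 h]
    push_cast
    rw [Finset.sum_eq_zero, zero_mul, zero_mul]
    intro k hk
    rw [mem_range] at hk
    rw [Nat.descFactorial_eq_zero_iff_lt.2 (by omega : k < i)]
    push_cast; ring
  · rw [range_eq_Ico, ← Finset.sum_Ico_consecutive _ (Nat.zero_le i) (by omega : i ≤ m+1)]
    have h1 : ∑ k ∈ Ico 0 i, (m.choose k : ℝ) * p^k * q^(m-k) * (k.descFactorial i : ℝ) = 0 := by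
      apply Finset.sum_eq_zero
      intro k hk
      rw [mem_Ico] at hk
      rw [Nat.descFactorial_eq_zero_iff_lt.2 (by omega : k < i)]
      push_cast; ring
    rw [h1, zero_add, Finset.sum_Ico_eq_sum_range]
    have h2 : m + 1 - i = (m - i) + 1 := by omega
    rw [h2]
    have h3 : ∀ j ∈ range ((m-i)+1),
        (m.choose (i+j) : ℝ) * p^(i+j) * q^(m-(i+j)) * ((i+j).descFactorial i : ℝ)
        = ((m.descFactorial i : ℝ) * p^i) * (p^j * q^((m-i)-j) * ((m-i).choose j : ℝ)) := by
      intro j hj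
      rw [mem_range] at hj
      have key := choose_mul_descFactorial' (Nat.le_add_right i j) (by omega : i + j ≤ m)
      have e1 : i + j - i = j := by omega
      rw [e1] at key
      have e2 : m - (i+j) = (m-i) - j := by omega
      have : ((m.choose (i+j) * (i+j).descFactorial i : ℕ) : ℝ)
          = ((m.descFactorial i * (m-i).choose j : ℕ) : ℝ) := by rw [key]
      push_cast at this
      rw [e2, pow_add]
      linear_combination (p ^ i * p ^ j * q ^ (m-i-j)) * this
    rw [Finset.sum_congr rfl h3, ← Finset.mul_sum, ← add_pow, mul_assoc]

lemma binom_moment (p q : ℝ) (m ℓ : ℕ) :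
    ∑ k ∈ range (m+1), (m.choose k : ℝ) * p^k * q^(m-k) * (k:ℝ)^ℓ
      = ∑ i ∈ range (ℓ+1),
          (stirling2 ℓ i : ℝ) * ((m.descFactorial i : ℝ) * p^i * (p+q)^(m-i)) := by
  have h : ∀ k : ℕ, ((k:ℝ))^ℓ = ∑ i ∈ range (ℓ+1),
      (stirling2 ℓ i : ℝ) * (k.descFactorial i : ℝ) := by
    intro k
    have := pow_eq_sum_stirling ℓ k
    have : ((k ^ ℓ : ℕ) : ℝ) = ((∑ i ∈ range (ℓ+1), stirling2 ℓ i * k.descFactorial i : ℕ) : ℝ) :=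
      by rw [this]
    push_cast at this
    exact this
  simp_rw [h, Finset.mul_sum]
  rw [Finset.sum_comm]
  apply Finset.sum_congr rfl
  intro i _
  rw [← binom_desc p q m i, Finset.mul_sum]
  apply Finset.sum_congr rfl
  intro k _
  ring

lemma aux_powdiv {T : ℝ} (hT : T ≠ 0) (m i : ℕ) :
    (m.descFactorial i : ℝ) * T^(m-i) / T^m = (m.descFactorial i : ℝ) / T^i := by
  rcases le_or_gt i m with h | h
  · have hm : T ^ m = T ^ i * T ^ (m - i) := by rw [← pow_add]; congr 1; omega
    rw [hm, mul_comm (T ^ i) (T ^ (m-i)), ← div_div, mul_div_assoc,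
      div_self (pow_ne_zero _ hT), mul_one]
  · simp [Nat.descFactorial_eq_zero_iff_lt.2 h]

lemma momR_rec (W0 B0 m c : ℕ) (hm : 1 ≤ m) (hT0 : m ≤ W0 + B0) (n s : ℕ) :
    momR W0 B0 m c s (n+1) =
      gammaR W0 B0 m c n s * momR W0 B0 m c s n + deltaR W0 B0 m c n s := by
  set T : ℕ := urnT W0 B0 m c n with hTdef
  have hTpos : 0 < T := by have : 1 ≤ W0 + B0 := le_trans hm hT0; simp [hTdef, urnT]; omega
  have hTne : ((T:ℝ)) ≠ 0 := by positivity
  -- Step A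
  have stepA : momR W0 B0 m c s (n+1) =
      ∑ w ∈ range (T + 1), massR W0 B0 m c n w *
        ∑ k ∈ range (m + 1),
          ((Nat.choose m k : ℝ) * (w : ℝ) ^ k * ((T : ℝ) - (w : ℝ)) ^ (m - k) / (T : ℝ) ^ m) *
            (((w + c * k : ℕ) : ℝ)) ^ s := by
    rw [momR]
    simp only [massR]
    simp_rw [Finset.sum_mul, ite_mul, zero_mul]
    rw [Finset.sum_comm]
    apply Finset.sum_congr rfl
    intro w hw
    rw [Finset.sum_comm, Finset.mul_sum]
    apply Finset.sum_congr rfl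
    intro k hk
    rw [mem_range] at hw hk
    have hmem : w + c * k ∈ range (urnT W0 B0 m c (n+1) + 1) := by
      rw [mem_range]
      have h1 : c * k ≤ c * m := Nat.mul_le_mul_left c (by omega)
      have h2 : urnT W0 B0 m c (n+1) = T + m * c := by
        simp [hTdef, urnT]; ring
      have h3 : c * m = m * c := Nat.mul_comm c m
      omega
    rw [Finset.sum_ite_eq' (range (urnT W0 B0 m c (n+1) + 1)) (w + c * k)
      (fun v => massR W0 B0 m c n w *
        ((Nat.choose m k : ℝ) * (w : ℝ) ^ k * ((T : ℝ) - (w : ℝ)) ^ (m - k) / (T : ℝ) ^ m) *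
        (v : ℝ) ^ s), if_pos hmem]
    ring
  -- Step B
  have stepB : ∀ w : ℕ,
      (∑ k ∈ range (m + 1),
        ((Nat.choose m k : ℝ) * (w : ℝ) ^ k * ((T : ℝ) - (w : ℝ)) ^ (m - k) / (T : ℝ) ^ m) *
          (((w + c * k : ℕ) : ℝ)) ^ s)
      = ∑ ℓ ∈ range (s+1), ∑ i ∈ range (ℓ+1),
          ((Nat.choose s ℓ : ℝ) * (c:ℝ)^ℓ * (stirling2 ℓ i : ℝ) * (m.descFactorial i : ℝ)
            / (T:ℝ)^i) * (w:ℝ)^(s - ℓ + i) := by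
    intro w
    have hcast : ∀ k : ℕ, (((w + c * k : ℕ) : ℝ)) ^ s
        = ∑ ℓ ∈ range (s+1), ((c:ℝ) * (k:ℝ))^ℓ * (w:ℝ)^(s-ℓ) * (Nat.choose s ℓ : ℝ) := by
      intro k
      have : (((w + c * k : ℕ) : ℝ)) = (c:ℝ)*(k:ℝ) + (w:ℝ) := by push_cast; ring
      rw [this, add_pow]
    simp_rw [hcast, Finset.mul_sum]
    rw [Finset.sum_comm]
    apply Finset.sum_congr rfl
    intro ℓ hℓ
    rw [mem_range] at hℓ
    have key := binom_moment (w:ℝ) ((T:ℝ) - (w:ℝ)) m ℓ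
    have hpq : (w:ℝ) + ((T:ℝ) - (w:ℝ)) = (T:ℝ) := by ring
    rw [hpq] at key
    calc ∑ k ∈ range (m+1),
          ((Nat.choose m k : ℝ) * (w : ℝ) ^ k * ((T : ℝ) - (w : ℝ)) ^ (m - k) / (T : ℝ) ^ m) *
            (((c:ℝ) * (k:ℝ))^ℓ * (w:ℝ)^(s-ℓ) * (Nat.choose s ℓ : ℝ))
        = ((c:ℝ)^ℓ * (w:ℝ)^(s-ℓ) * (Nat.choose s ℓ : ℝ) / (T:ℝ)^m) *
            ∑ k ∈ range (m+1),
              (Nat.choose m k : ℝ) * (w : ℝ) ^ k * ((T : ℝ) - (w : ℝ)) ^ (m - k) * (k:ℝ)^ℓ := by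
          rw [Finset.mul_sum]
          apply Finset.sum_congr rfl
          intro k _
          rw [mul_pow]
          ring
      _ = ∑ i ∈ range (ℓ+1),
          ((Nat.choose s ℓ : ℝ) * (c:ℝ)^ℓ * (stirling2 ℓ i : ℝ) * (m.descFactorial i : ℝ)
            / (T:ℝ)^i) * (w:ℝ)^(s - ℓ + i) := by
          rw [key, Finset.mul_sum]
          apply Finset.sum_congr rfl
          intro i _
          have haux := aux_powdiv hTne m i
          rw [pow_add]
          linear_combination ((Nat.choose s ℓ : ℝ) * (c:ℝ)^ℓ * (stirling2 ℓ i : ℝ)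
            * (w:ℝ)^(s-ℓ) * (w:ℝ)^i) * haux
  -- Step C
  have stepC : momR W0 B0 m c s (n+1) =
      ∑ ℓ ∈ range (s+1), ∑ i ∈ range (ℓ+1),
        ((Nat.choose s ℓ : ℝ) * (c:ℝ)^ℓ * (stirling2 ℓ i : ℝ) * (m.descFactorial i : ℝ)
          / (T:ℝ)^i) * momR W0 B0 m c (s - ℓ + i) n := by
    rw [stepA]
    simp_rw [stepB, Finset.mul_sum]
    rw [Finset.sum_comm]
    apply Finset.sum_congr rfl
    intro ℓ _
    rw [Finset.sum_comm]
    apply Finset.sum_congr rfl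
    intro i _
    rw [momR, Finset.mul_sum]
    apply Finset.sum_congr rfl
    intro w _
    ring
  -- Step D
  rw [stepC]
  have hsplit : (∑ ℓ ∈ range (s+1), ∑ i ∈ range (ℓ+1),
      ((Nat.choose s ℓ : ℝ) * (c:ℝ)^ℓ * (stirling2 ℓ i : ℝ) * (m.descFactorial i : ℝ)
        / (T:ℝ)^i) * momR W0 B0 m c (s - ℓ + i) n)
      = (∑ ℓ ∈ range (s+1), ∑ i ∈ range ℓ,
      ((Nat.choose s ℓ : ℝ) * (c:ℝ)^ℓ * (stirling2 ℓ i : ℝ) * (m.descFactorial i : ℝ)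
        / (T:ℝ)^i) * momR W0 B0 m c (s - ℓ + i) n)
      + ∑ ℓ ∈ range (s+1),
      ((Nat.choose s ℓ : ℝ) * (c:ℝ)^ℓ * (stirling2 ℓ ℓ : ℝ) * (m.descFactorial ℓ : ℝ)
        / (T:ℝ)^ℓ) * momR W0 B0 m c (s - ℓ + ℓ) n := by
    rw [← Finset.sum_add_distrib]
    apply Finset.sum_congr rfl
    intro ℓ _
    rw [Finset.sum_range_succ]
  rw [hsplit]
  have hdiag : (∑ ℓ ∈ range (s+1),
      ((Nat.choose s ℓ : ℝ) * (c:ℝ)^ℓ * (stirling2 ℓ ℓ : ℝ) * (m.descFactorial ℓ : ℝ)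
        / (T:ℝ)^ℓ) * momR W0 B0 m c (s - ℓ + ℓ) n)
      = gammaR W0 B0 m c n s * momR W0 B0 m c s n := by
    rw [gammaR, Finset.sum_mul]
    apply Finset.sum_congr rfl
    intro ℓ hℓ
    rw [mem_range] at hℓ
    have e : s - ℓ + ℓ = s := by omega
    rw [e, stirling2_self]
    push_cast
    ring
  have hoff : (∑ ℓ ∈ range (s+1), ∑ i ∈ range ℓ,
      ((Nat.choose s ℓ : ℝ) * (c:ℝ)^ℓ * (stirling2 ℓ i : ℝ) * (m.descFactorial i : ℝ)
        / (T:ℝ)^i) * momR W0 B0 m c (s - ℓ + i) n)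
      = deltaR W0 B0 m c n s := by
    have hper : ∀ ℓ ∈ range (s+1), (∑ i ∈ range ℓ,
        ((Nat.choose s ℓ : ℝ) * (c:ℝ)^ℓ * (stirling2 ℓ i : ℝ) * (m.descFactorial i : ℝ)
          / (T:ℝ)^i) * momR W0 B0 m c (s - ℓ + i) n)
        = ∑ j ∈ Icc 2 ℓ,
        ((Nat.choose s ℓ : ℝ) * (c:ℝ)^ℓ * (stirling2 ℓ (ℓ+1-j) : ℝ)
          * (m.descFactorial (ℓ+1-j) : ℝ) / (T:ℝ)^(ℓ+1-j))
          * momR W0 B0 m c (s - ℓ + (ℓ+1-j)) n := by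
      intro ℓ _
      rcases Nat.eq_zero_or_pos ℓ with h0 | hpos
      · subst h0; simp
      · rw [range_eq_Ico, ← Finset.sum_Ico_consecutive _ (Nat.zero_le 1) hpos]
        have hz : stirling2 ℓ 0 = 0 := by
          obtain ⟨ℓ', rfl⟩ : ∃ ℓ', ℓ = ℓ' + 1 := ⟨ℓ - 1, by omega⟩
          exact stirling2_zero ℓ'
        have h1 : (∑ i ∈ Ico 0 1,
            ((Nat.choose s ℓ : ℝ) * (c:ℝ)^ℓ * (stirling2 ℓ i : ℝ) * (m.descFactorial i : ℝ)
              / (T:ℝ)^i) * momR W0 B0 m c (s - ℓ + i) n) = 0 := by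
          simp [hz]
        rw [h1, zero_add]
        refine Finset.sum_nbij' (fun x => ℓ + 1 - x) (fun x => ℓ + 1 - x) ?_ ?_ ?_ ?_ ?_
        all_goals intro x hx
        all_goals simp only [mem_Ico, mem_Icc] at hx ⊢
        · omega
        · omega
        · omega
        · omega
        · have e : ℓ + 1 - (ℓ + 1 - x) = x := by omega
          rw [e]
    rw [Finset.sum_congr rfl hper]
    rw [Finset.sum_comm' (t' := Icc 2 s) (s' := fun j => Icc j s)
      (by intro x y; simp only [mem_range, mem_Icc]; omega)]
    rw [deltaR]
    apply Finset.sum_congr rfl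
    intro j hj
    rw [mem_Icc] at hj
    rw [Finset.mul_sum]
    apply Finset.sum_congr rfl
    intro ℓ hℓ
    rw [mem_Icc] at hℓ
    have e : s - ℓ + (ℓ + 1 - j) = s + 1 - j := by omega
    rw [e]
    ring
  rw [hdiag, hoff, add_comm]

lemma momR_zero (W0 B0 m c s : ℕ) : momR W0 B0 m c s 0 = (W0:ℝ)^s := by
  rw [momR]
  simp only [massR, ite_mul, one_mul, zero_mul]
  rw [Finset.sum_ite_eq' (range (urnT W0 B0 m c 0 + 1)) W0 (fun w => (w:ℝ)^s),
    if_pos (by simp [urnT])]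

lemma gammaR_ge_one (W0 B0 m c n s : ℕ) : 1 ≤ gammaR W0 B0 m c n s := by
  rw [gammaR, Finset.sum_range_succ']
  simp only [pow_zero, Nat.choose_zero_right, Nat.descFactorial_zero, Nat.cast_one]
  have h1 : ((1:ℝ) * 1 * 1 / 1) = 1 := by norm_num
  rw [h1]
  have h2 : 0 ≤ ∑ i ∈ range s, (c : ℝ) ^ (i+1) * (Nat.choose s (i+1) : ℝ) *
      (Nat.descFactorial m (i+1) : ℝ) / (urnT W0 B0 m c n : ℝ) ^ (i+1) := by
    apply Finset.sum_nonneg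
    intro i _
    positivity
  linarith


/-- In model `R`, the closed form
`E(W_n^s) = (∏_{j<n} γ_{j,s})·(W_0^s + Σ_{ℓ<n} δ_{ℓ,s}/∏_{j≤ℓ} γ_{j,s})`; equivalently
the recurrence `E(W_n^s) = γ_{n−1,s}·E(W_{n−1}^s) + δ_{n−1,s}` for `n ≥ 1`. -/
theorem modelR_moment_closedForm (W0 B0 m c : ℕ) (hm : 1 ≤ m) (hc : 1 ≤ c)
    (hW0 : 1 ≤ W0) (hB0 : 1 ≤ B0) (hT0 : m ≤ W0 + B0) :
    (∀ n s : ℕ, 1 ≤ s →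
      momR W0 B0 m c s n =
        (∏ j ∈ Finset.range n, gammaR W0 B0 m c j s) *
          ((W0 : ℝ) ^ s + ∑ ℓ ∈ Finset.range n,
            deltaR W0 B0 m c ℓ s / ∏ j ∈ Finset.range (ℓ + 1), gammaR W0 B0 m c j s)) ∧
    (∀ n s : ℕ, 1 ≤ n → 1 ≤ s →
      momR W0 B0 m c s n =
        gammaR W0 B0 m c (n - 1) s * momR W0 B0 m c s (n - 1) + deltaR W0 B0 m c (n - 1) s) := by
  constructor
  · intro n s _
    induction n with
    | zero => simp [momR_zero]
    | succ n ih =>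
      have hprod : (0:ℝ) < ∏ j ∈ range (n+1), gammaR W0 B0 m c j s := by
        apply Finset.prod_pos
        intro j _
        linarith [gammaR_ge_one W0 B0 m c j s]
      have hne : (∏ j ∈ range (n+1), gammaR W0 B0 m c j s) ≠ 0 := ne_of_gt hprod
      rw [momR_rec W0 B0 m c hm hT0 n s, ih, Finset.sum_range_succ]
      rw [Finset.prod_range_succ] at hne ⊢
      have hne1 := left_ne_zero_of_mul hne
      have hne2 := right_ne_zero_of_mul hne
      field_simp
      ring
  · intro n s hn _
    obtain ⟨n', rfl⟩ : ∃ n', n = n' + 1 := ⟨n - 1, by omega⟩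
    simpa using momR_rec W0 B0 m c hm hT0 n' s
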